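/- The maximum integer computable by an addition–multiplication chain (starting from 1) using exactly a additions and m multiplications is 2^(a · 2^m), achieved by doubling a times and then squaring m times. -/

import Mathlib

/-- `AMCComputes a m z` : there is an addition–multiplication chain starting
from `1`, using exactly `a` additions and `m` multiplications (`op i = true`
means step `i` is an addition), which computes `z`. -/
def AMCComputes (a m : ℕ) (z : ℕ) : Prop :=
  ∃ v : ℕ → ℕ, ∃ op : ℕ → Bool,
    v 0 = 1 ∧
    (∀ i < a + m, ∃ j k, j ≤ i ∧ k ≤ i ∧
      v (i + 1) = if op i then v j + v k else v j * v k) ∧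
    ((Finset.range (a + m)).filter (fun i => op i = true)).card = a ∧
    z = v (a + m)

lemma amc_mono {a1 m1 a2 m2 : ℕ} (ha : a1 ≤ a2) (hm : m1 ≤ m2) :
    a1 * 2 ^ m1 ≤ a2 * 2 ^ m2 :=
  Nat.mul_le_mul ha (Nat.pow_le_pow_right (by norm_num) hm)

lemma amc_upper (a m : ℕ) (z : ℕ) (h : AMCComputes a m z) :
    z ≤ 2 ^ (a * 2 ^ m) := by
  obtain ⟨v, op, h0, hstep, hcard, hz⟩ := h
  set A : ℕ → ℕ := fun i => ((Finset.range i).filter (fun t => op t = true)).card with hA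
  set M : ℕ → ℕ := fun i => ((Finset.range i).filter (fun t => op t = false)).card with hM
  have hAmono : ∀ {j i : ℕ}, j ≤ i → A j ≤ A i := fun hji =>
    Finset.card_le_card (Finset.filter_subset_filter _ (Finset.range_subset_range.mpr hji))
  have hMmono : ∀ {j i : ℕ}, j ≤ i → M j ≤ M i := fun hji =>
    Finset.card_le_card (Finset.filter_subset_filter _ (Finset.range_subset_range.mpr hji))
  have hAM : ∀ i, A i + M i = i := by
    intro i
    simpa using Finset.card_filter_add_card_filter_not
      (s := Finset.range i) (p := fun t => op t = true)
  have hAsucc : ∀ i, op i = true → A (i + 1) = A i + 1 ∧ M (i + 1) = M i := by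
    intro i hop
    constructor
    · simp [hA, Finset.range_add_one, Finset.filter_insert, hop]
    · simp [hM, Finset.range_add_one, Finset.filter_insert, hop]
  have hMsucc : ∀ i, op i = false → A (i + 1) = A i ∧ M (i + 1) = M i + 1 := by
    intro i hop
    constructor
    · simp [hA, Finset.range_add_one, Finset.filter_insert, hop]
    · simp [hM, Finset.range_add_one, Finset.filter_insert, hop]
  have key : ∀ i, i ≤ a + m → v i ≤ 2 ^ (A i * 2 ^ (M i)) := by
    intro i
    induction i using Nat.strong_induction_on with
    | _ i ih =>
      match i with
      | 0 => intro _; simp [h0, hA, hM]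
      | Nat.succ n =>
        intro hi
        have hnlt : n < a + m := hi
        obtain ⟨j, k, hj, hk, heq⟩ := hstep n hnlt
        have hvj : v j ≤ 2 ^ (A n * 2 ^ (M n)) :=
          le_trans (ih j (Nat.lt_succ_of_le hj) (le_trans hj (le_of_lt hnlt)))
            (Nat.pow_le_pow_right (by norm_num) (amc_mono (hAmono hj) (hMmono hj)))
        have hvk : v k ≤ 2 ^ (A n * 2 ^ (M n)) :=
          le_trans (ih k (Nat.lt_succ_of_le hk) (le_trans hk (le_of_lt hnlt)))
            (Nat.pow_le_pow_right (by norm_num) (amc_mono (hAmono hk) (hMmono hk)))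
        cases hop : op n with
        | true =>
          obtain ⟨hA1, hM1⟩ := hAsucc n hop
          rw [heq, if_pos hop, hA1, hM1]
          calc v j + v k ≤ 2 ^ (A n * 2 ^ (M n)) + 2 ^ (A n * 2 ^ (M n)) :=
                Nat.add_le_add hvj hvk
            _ = 2 ^ (A n * 2 ^ (M n) + 1) := by ring
            _ ≤ 2 ^ ((A n + 1) * 2 ^ (M n)) := by
                apply Nat.pow_le_pow_right (by norm_num)
                have : 1 ≤ 2 ^ (M n) := Nat.one_le_two_pow
                nlinarith
        | false =>
          obtain ⟨hA1, hM1⟩ := hMsucc n hop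
          rw [heq, if_neg (by simp [hop]), hA1, hM1]
          calc v j * v k ≤ 2 ^ (A n * 2 ^ (M n)) * 2 ^ (A n * 2 ^ (M n)) :=
                Nat.mul_le_mul hvj hvk
            _ = 2 ^ (A n * 2 ^ (M n + 1)) := by rw [← pow_add]; ring_nf
  have hAfin : A (a + m) = a := hcard
  have hMfin : M (a + m) = m := by
    have := hAM (a + m)
    omega
  calc z = v (a + m) := hz
    _ ≤ 2 ^ (A (a + m) * 2 ^ (M (a + m))) := key _ le_rfl
    _ = 2 ^ (a * 2 ^ m) := by rw [hAfin, hMfin]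

theorem amc_max_value (a m : ℕ) :
    (∀ z, AMCComputes a m z → z ≤ 2 ^ (a * 2 ^ m)) ∧
    AMCComputes a m (2 ^ (a * 2 ^ m)) := by
  refine ⟨fun z hz => amc_upper a m z hz, ?_⟩
  refine ⟨fun i => if i ≤ a then 2 ^ i else 2 ^ (a * 2 ^ (i - a)), fun i => decide (i < a),
    ?_, ?_, ?_, ?_⟩
  · simp
  · intro i hi
    refine ⟨i, i, le_rfl, le_rfl, ?_⟩
    by_cases hia : i < a
    · have h1 : i + 1 ≤ a := hia
      simp only [if_pos h1, if_pos (le_of_lt hia), decide_eq_true_eq, hia, if_true,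
        decide_true]
      ring
    · have hia' : a ≤ i := le_of_not_gt hia
      have h1 : ¬ (i + 1 ≤ a) := by omega
      have hvi : (if i ≤ a then 2 ^ i else 2 ^ (a * 2 ^ (i - a))) = 2 ^ (a * 2 ^ (i - a)) := by
        by_cases h : i ≤ a
        · have : i = a := le_antisymm h hia'
          simp [this]
        · simp [h]
      simp only [if_neg h1, hvi, decide_eq_true_eq, hia, if_false, decide_false]
      rw [← pow_add]
      congr 1
      have : i + 1 - a = (i - a) + 1 := by omega
      rw [this, pow_succ]
      ring
  · have : ((Finset.range (a + m)).filter (fun i => decide (i < a) = true)) =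
        Finset.range a := by
      ext x
      simp [Finset.mem_filter, Finset.mem_range]
      omega
    rw [this, Finset.card_range]
  · by_cases hm0 : m = 0
    · subst hm0; simp
    · have h1 : ¬ (a + m ≤ a) := by omega
      simp [h1]
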